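/- arXiv:2207.06564 — 5 statements merged into one kernel-verified Lean document; each statement's English description precedes it below -/
import Mathlib

section
/- In the repeated static Roy model with binary outcomes where Dt = 1{Yt(1) ≥ Yt(0)} for t = 0,1, Yt(d) ∈ {0,1}, and P(Yt(1) ≥ Yt(0)) ∈ (0,1) for each t: the full parallel trends condition holds if and only if both (1) E[Y0(0)] = E[Y1(0)] (stationarity of mean untreated outcomes), and (2) P(Y0(0) = Y1(0) = 1 | D0·D1 = 0) = 1 (untreated outcomes are degenerate at 1 among the ever-untreated). -/
open MeasureTheory ProbabilityTheory

/-- Conditional expectation of a real random variable `Y` given the event `A`. -/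
noncomputable def cexp {Ω : Type*} {mΩ : MeasurableSpace Ω} (μ : Measure Ω) (A : Set Ω)
    (Y : Ω → ℝ) : ℝ := ∫ ω, Y ω ∂(@ProbabilityTheory.cond Ω mΩ μ A)

/-- Static repeated Roy model: with binary potential outcomes, myopic Roy selection
`Dt = 1{Yt(1) ≥ Yt(0)}`, and non-degenerate treatment probabilities, full parallel trends
holds iff (1) mean untreated outcomes are stationary and (2) untreated outcomes are
degenerate at 1 among the ever-untreated. -/
theorem stmt_6 {Ω : Type*} [MeasurableSpace Ω] (μ : Measure Ω) [IsProbabilityMeasure μ]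
    (Y00 Y01 Y10 Y11 : Ω → ℝ)
    (hbin : ∀ ω, (Y00 ω = 0 ∨ Y00 ω = 1) ∧ (Y01 ω = 0 ∨ Y01 ω = 1) ∧
      (Y10 ω = 0 ∨ Y10 ω = 1) ∧ (Y11 ω = 0 ∨ Y11 ω = 1))
    (hY00 : Measurable Y00) (hY01 : Measurable Y01)
    (hY10 : Measurable Y10) (hY11 : Measurable Y11)
    (D0 D1 : Ω → ℕ)
    -- myopic Roy selection rule in each period
    (hD0 : ∀ ω, D0 ω = if Y01 ω ≥ Y00 ω then 1 else 0)
    (hD1 : ∀ ω, D1 ω = if Y11 ω ≥ Y10 ω then 1 else 0)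
    -- non-degenerate treatment probabilities in each period
    (hP0 : 0 < μ {ω | D0 ω = 1} ∧ μ {ω | D0 ω = 1} < 1)
    (hP1 : 0 < μ {ω | D1 ω = 1} ∧ μ {ω | D1 ω = 1} < 1) :
    (∃ τ : ℝ, ∀ d0 d1 : ℕ, d0 ≤ 1 → d1 ≤ 1 → 0 < μ {ω | D0 ω = d0 ∧ D1 ω = d1} →
        cexp μ {ω | D0 ω = d0 ∧ D1 ω = d1} (fun ω => Y10 ω - Y00 ω) = τ)
    ↔
    ((∫ ω, Y00 ω ∂μ = ∫ ω, Y10 ω ∂μ) ∧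
      (μ[|{ω | D0 ω * D1 ω = 0}]) {ω | Y00 ω = 1 ∧ Y10 ω = 1} = 1) := by
  classical
  set f : Ω → ℝ := fun ω => Y10 ω - Y00 ω with hfdef
  -- measurability of selection
  have hmD0 : Measurable D0 := by
    have h : D0 = fun ω => if Y00 ω ≤ Y01 ω then 1 else 0 := by
      funext ω; rw [hD0 ω]
    rw [h]
    exact Measurable.ite (measurableSet_le hY00 hY01) measurable_const measurable_const
  have hmD1 : Measurable D1 := by
    have h : D1 = fun ω => if Y10 ω ≤ Y11 ω then 1 else 0 := by
      funext ω; rw [hD1 ω]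
    rw [h]
    exact Measurable.ite (measurableSet_le hY10 hY11) measurable_const measurable_const
  -- pointwise facts
  have hc0 : ∀ ω, D0 ω = 0 ∨ D0 ω = 1 := fun ω => by rw [hD0 ω]; split <;> simp
  have hc1 : ∀ ω, D1 ω = 0 ∨ D1 ω = 1 := fun ω => by rw [hD1 ω]; split <;> simp
  have h00 : ∀ ω, D0 ω = 0 → Y00 ω = 1 := by
    intro ω h; rw [hD0 ω] at h
    split at h
    · simp at h
    · next hlt =>
      push_neg at hlt
      rcases (hbin ω).1 with h0 | h0 <;> rcases (hbin ω).2.1 with h1 | h1 <;> linarith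
  have h10 : ∀ ω, D1 ω = 0 → Y10 ω = 1 := by
    intro ω h; rw [hD1 ω] at h
    split at h
    · simp at h
    · next hlt =>
      push_neg at hlt
      rcases (hbin ω).2.2.1 with h0 | h0 <;> rcases (hbin ω).2.2.2 with h1 | h1 <;> linarith
  -- integrability
  have hibd : ∀ Y : Ω → ℝ, Measurable Y → (∀ ω, Y ω = 0 ∨ Y ω = 1) → Integrable Y μ := by
    intro Y hm hb
    refine (integrable_const (1 : ℝ)).mono' hm.aestronglyMeasurable ?_
    filter_upwards with ω
    rcases hb ω with h | h <;> simp [h]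
  have hi00 : Integrable Y00 μ := hibd Y00 hY00 fun ω => (hbin ω).1
  have hi10 : Integrable Y10 μ := hibd Y10 hY10 fun ω => (hbin ω).2.2.1
  have hif : Integrable f μ := hi10.sub hi00
  -- cells
  set A : ℕ → ℕ → Set Ω := fun d0 d1 => {ω | D0 ω = d0 ∧ D1 ω = d1} with hA
  have hAe : ∀ d0 d1 : ℕ, {ω | D0 ω = d0 ∧ D1 ω = d1} = A d0 d1 := fun _ _ => rfl
  have hmA : ∀ d0 d1, MeasurableSet (A d0 d1) := by
    intro d0 d1
    have h : A d0 d1 = D0 ⁻¹' {d0} ∩ D1 ⁻¹' {d1} := by ext ω; simp [hA]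
    rw [h]
    exact (hmD0 (measurableSet_singleton d0)).inter (hmD1 (measurableSet_singleton d1))
  -- cexp formula
  have hcexp : ∀ B : Set Ω, cexp μ B f = (μ B).toReal⁻¹ * ∫ ω in B, f ω ∂μ := by
    intro B
    unfold cexp
    rw [ProbabilityTheory.cond, integral_smul_measure, ENNReal.toReal_inv, smul_eq_mul]
  -- complements
  have hD0c : {ω | D0 ω = 1}ᶜ = {ω | D0 ω = 0} := by
    ext ω; rcases hc0 ω with h | h <;> simp [h]
  have hD1c : {ω | D1 ω = 1}ᶜ = {ω | D1 ω = 0} := by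
    ext ω; rcases hc1 ω with h | h <;> simp [h]
  have hmsD0 : MeasurableSet {ω | D0 ω = 1} := hmD0 (measurableSet_singleton 1)
  have hmsD1 : MeasurableSet {ω | D1 ω = 1} := hmD1 (measurableSet_singleton 1)
  have hpos0 : 0 < μ {ω | D0 ω = 0} := by
    rw [← hD0c, measure_compl hmsD0 (measure_ne_top μ _), measure_univ]
    exact tsub_pos_of_lt hP0.2
  have hpos1 : 0 < μ {ω | D1 ω = 0} := by
    rw [← hD1c, measure_compl hmsD1 (measure_ne_top μ _), measure_univ]
    exact tsub_pos_of_lt hP1.2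
  -- splitting of {D0 = d0} by D1 and of {D1 = d1} by D0
  have hsplit0 : ∀ d0 : ℕ, {ω | D0 ω = d0} = A d0 0 ∪ A d0 1 := by
    intro d0; ext ω
    simp only [hA, Set.mem_setOf_eq, Set.mem_union]
    rcases hc1 ω with h | h <;> simp [h]
  have hsplit1 : ∀ d1 : ℕ, {ω | D1 ω = d1} = A 0 d1 ∪ A 1 d1 := by
    intro d1; ext ω
    simp only [hA, Set.mem_setOf_eq, Set.mem_union]
    rcases hc0 ω with h | h <;> simp [h]
  have hdisj0 : ∀ d0 : ℕ, Disjoint (A d0 0) (A d0 1) := by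
    intro d0
    rw [Set.disjoint_left]
    rintro ω ⟨_, h0⟩ ⟨_, h1⟩
    omega
  have hdisj1 : ∀ d1 : ℕ, Disjoint (A 0 d1) (A 1 d1) := by
    intro d1
    rw [Set.disjoint_left]
    rintro ω ⟨h0, _⟩ ⟨h1, _⟩
    omega
  have hIs : ∀ d0 : ℕ, ∫ ω in {ω | D0 ω = d0}, f ω ∂μ
      = (∫ ω in A d0 0, f ω ∂μ) + ∫ ω in A d0 1, f ω ∂μ := by
    intro d0
    rw [hsplit0 d0, setIntegral_union (hdisj0 d0) (hmA d0 1) hif.integrableOn hif.integrableOn]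
  have htotal : ∫ ω, f ω ∂μ =
      ((∫ ω in A 1 0, f ω ∂μ) + ∫ ω in A 1 1, f ω ∂μ) +
      ((∫ ω in A 0 0, f ω ∂μ) + ∫ ω in A 0 1, f ω ∂μ) := by
    rw [← integral_add_compl hmsD0 hif, hD0c, hIs 1, hIs 0]
  have hM0 : ∀ d0 : ℕ, μ {ω | D0 ω = d0} = μ (A d0 0) + μ (A d0 1) := by
    intro d0; rw [hsplit0 d0, measure_union (hdisj0 d0) (hmA d0 1)]
  have hM1 : ∀ d1 : ℕ, μ {ω | D1 ω = d1} = μ (A 0 d1) + μ (A 1 d1) := by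
    intro d1; rw [hsplit1 d1, measure_union (hdisj1 d1) (hmA 1 d1)]
  -- the ever-untreated event and the degenerate-outcome event
  set U : Set Ω := {ω | D0 ω * D1 ω = 0} with hUdef
  set S : Set Ω := {ω | Y00 ω = 1 ∧ Y10 ω = 1} with hSdef
  have hmU : MeasurableSet U := by
    have h : U = (fun ω => D0 ω * D1 ω) ⁻¹' {0} := by ext ω; simp [hUdef]
    rw [h]; exact (hmD0.mul hmD1) (measurableSet_singleton 0)
  have hmS : MeasurableSet S := by
    have h : S = Y00 ⁻¹' {1} ∩ Y10 ⁻¹' {1} := by ext ω; simp [hSdef]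
    rw [h]
    exact (hY00 (measurableSet_singleton 1)).inter (hY10 (measurableSet_singleton 1))
  have hUsub : {ω | D0 ω = 0} ⊆ U := by
    intro ω h
    have h' : D0 ω = 0 := h
    show D0 ω * D1 ω = 0
    simp [h']
  have hUpos : 0 < μ U := lt_of_lt_of_le hpos0 (measure_mono hUsub)
  have hUne : μ U ≠ 0 := hUpos.ne'
  have hUtop : μ U ≠ ⊤ := measure_ne_top μ U
  -- the conditional-probability condition as a null-set condition
  have hcond : (μ[|U]) S = 1 ↔ μ (U \ S) = 0 := by
    rw [cond_apply hmU]
    constructor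
    · intro h
      have h2 : μ (U ∩ S) = μ U := by
        have h3 := congrArg (fun x => μ U * x) h
        simp only [← mul_assoc, ENNReal.mul_inv_cancel hUne hUtop, one_mul, mul_one] at h3
        exact h3
      have h4 := measure_inter_add_diff (μ := μ) U hmS
      rw [h2] at h4
      have h5 : μ U + μ (U \ S) = μ U + 0 := by rw [add_zero]; exact h4
      exact (ENNReal.add_right_inj hUtop).1 h5
    · intro h
      have h2 : μ (U ∩ S) = μ U := by
        have h4 := measure_inter_add_diff (μ := μ) U hmS
        rwa [h, add_zero] at h4
      rw [h2]
      exact ENNReal.inv_mul_cancel hUne hUtop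
  constructor
  · -- forward direction
    rintro ⟨τ, hτ⟩
    have hnull : ∀ d0 d1 : ℕ, μ (A d0 d1) = 0 → ∫ ω in A d0 d1, f ω ∂μ = 0 := by
      intro d0 d1 h
      rw [Measure.restrict_eq_zero.2 h, integral_zero_measure]
    have hposint : ∀ d0 d1 : ℕ, d0 ≤ 1 → d1 ≤ 1 → 0 < μ (A d0 d1) →
        ∫ ω in A d0 d1, f ω ∂μ = (μ (A d0 d1)).toReal * τ := by
      intro d0 d1 hd0 hd1 hp
      have h := hτ d0 d1 hd0 hd1 hp
      rw [hAe, hcexp] at h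
      have htR : (μ (A d0 d1)).toReal ≠ 0 :=
        ENNReal.toReal_ne_zero.2 ⟨hp.ne', measure_ne_top μ _⟩
      field_simp at h
      linarith
    have htRpos : ∀ d0 d1 : ℕ, 0 < μ (A d0 d1) → 0 < (μ (A d0 d1)).toReal := by
      intro d0 d1 hp
      exact ENNReal.toReal_pos hp.ne' (measure_ne_top μ _)
    -- the value of τ is zero
    have hτ0 : τ = 0 := by
      by_cases hA00 : 0 < μ (A 0 0)
      · have h := hτ 0 0 (by norm_num) (by norm_num) hA00
        rw [hAe, hcexp] at h
        have hz : ∫ ω in A 0 0, f ω ∂μ = 0 := by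
          rw [setIntegral_congr_fun (hmA 0 0) (g := fun _ => (0 : ℝ)) ?_, integral_zero]
          rintro ω ⟨hd0, hd1⟩
          have e0 := h00 ω hd0
          have e1 := h10 ω hd1
          simp only [hfdef]
          linarith
        rw [hz, mul_zero] at h
        exact h.symm
      · have hA00z : μ (A 0 0) = 0 := by
          by_contra hne
          exact hA00 (pos_iff_ne_zero.2 hne)
        have hA01 : 0 < μ (A 0 1) := by
          have := hM0 0
          rw [hA00z, zero_add] at this
          rw [← this]; exact hpos0
        have hA10 : 0 < μ (A 1 0) := by
          have := hM1 0
          rw [hA00z, zero_add] at this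
          rw [← this]; exact hpos1
        have hle : τ ≤ 0 := by
          have h := hτ 0 1 (by norm_num) (by norm_num) hA01
          rw [hAe, hcexp] at h
          have hint_le : ∫ ω in A 0 1, f ω ∂μ ≤ 0 := by
            apply integral_nonpos_of_ae
            rw [Filter.EventuallyLE, ae_restrict_iff' (hmA 0 1)]
            apply Filter.Eventually.of_forall
            rintro ω ⟨hd0, _⟩
            have e0 := h00 ω hd0
            rcases (hbin ω).2.2.1 with h1 | h1 <;> simp only [hfdef, Pi.zero_apply] <;> linarith
          rw [← h]
          exact mul_nonpos_of_nonneg_of_nonpos (by positivity) hint_le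
        have hge : 0 ≤ τ := by
          have h := hτ 1 0 (by norm_num) (by norm_num) hA10
          rw [hAe, hcexp] at h
          have hint_ge : 0 ≤ ∫ ω in A 1 0, f ω ∂μ := by
            apply integral_nonneg_of_ae
            rw [Filter.EventuallyLE, ae_restrict_iff' (hmA 1 0)]
            apply Filter.Eventually.of_forall
            rintro ω ⟨_, hd1⟩
            have e1 := h10 ω hd1
            rcases (hbin ω).1 with h1 | h1 <;> simp only [hfdef, Pi.zero_apply] <;> linarith
          rw [← h]
          positivity
        linarith
    -- all cell integrals vanish
    have hI : ∀ d0 d1 : ℕ, d0 ≤ 1 → d1 ≤ 1 → ∫ ω in A d0 d1, f ω ∂μ = 0 := by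
      intro d0 d1 hd0 hd1
      rcases eq_or_lt_of_le (zero_le : 0 ≤ μ (A d0 d1)) with h | h
      · exact hnull d0 d1 h.symm
      · rw [hposint d0 d1 hd0 hd1 h, hτ0, mul_zero]
    have hEf : ∫ ω, f ω ∂μ = 0 := by
      rw [htotal, hI 1 0 (by norm_num) (by norm_num), hI 1 1 (by norm_num) (by norm_num),
        hI 0 0 (by norm_num) (by norm_num), hI 0 1 (by norm_num) (by norm_num)]
      ring
    have hmean : ∫ ω, Y00 ω ∂μ = ∫ ω, Y10 ω ∂μ := by
      have hsub := integral_sub hi10 hi00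
      have : ∫ ω, (Y10 ω - Y00 ω) ∂μ = 0 := hEf
      rw [hsub] at this
      linarith
    -- null parts
    have hN00 : μ (A 0 0 \ S) = 0 := by
      have h : A 0 0 \ S = ∅ := Set.eq_empty_iff_forall_notMem.2 (by
        rintro ω ⟨⟨hd0, hd1⟩, hS⟩
        exact hS ⟨h00 ω hd0, h10 ω hd1⟩)
      rw [h, measure_empty]
    have hN01 : μ (A 0 1 \ S) = 0 := by
      rcases eq_or_lt_of_le (zero_le : 0 ≤ μ (A 0 1)) with h | h
      · exact measure_mono_null Set.diff_subset h.symm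
      · have hIz : ∫ ω in A 0 1, (fun ω => -f ω) ω ∂μ = 0 := by
          rw [integral_neg, hI 0 1 (by norm_num) (by norm_num), neg_zero]
        have hnn : 0 ≤ᵐ[μ.restrict (A 0 1)] fun ω => -f ω := by
          rw [Filter.EventuallyLE, ae_restrict_iff' (hmA 0 1)]
          apply Filter.Eventually.of_forall
          rintro ω ⟨hd0, _⟩
          have e0 := h00 ω hd0
          rcases (hbin ω).2.2.1 with h1 | h1 <;> simp only [hfdef, Pi.zero_apply] <;> linarith
        have hae := (setIntegral_eq_zero_iff_of_nonneg_ae hnn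
          (hif.neg.integrableOn)).1 hIz
        have hmem : ∀ᵐ ω ∂(μ.restrict (A 0 1)), ω ∈ S := by
          filter_upwards [hae, ae_restrict_mem (hmA 0 1)] with ω hfω hω
          have e0 := h00 ω hω.1
          have hfz : f ω = 0 := by
            have : -f ω = 0 := hfω
            linarith
          refine ⟨e0, ?_⟩
          simp only [hfdef] at hfz
          linarith
        have h2 : μ.restrict (A 0 1) Sᶜ = 0 := ae_iff.1 hmem
        rw [Measure.restrict_apply hmS.compl, Set.inter_comm, ← Set.diff_eq] at h2
        exact h2
    have hN10 : μ (A 1 0 \ S) = 0 := by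
      rcases eq_or_lt_of_le (zero_le : 0 ≤ μ (A 1 0)) with h | h
      · exact measure_mono_null Set.diff_subset h.symm
      · have hIz : ∫ ω in A 1 0, f ω ∂μ = 0 := hI 1 0 (by norm_num) (by norm_num)
        have hnn : 0 ≤ᵐ[μ.restrict (A 1 0)] f := by
          rw [Filter.EventuallyLE, ae_restrict_iff' (hmA 1 0)]
          apply Filter.Eventually.of_forall
          rintro ω ⟨_, hd1⟩
          have e1 := h10 ω hd1
          rcases (hbin ω).1 with h1 | h1 <;> simp only [hfdef, Pi.zero_apply] <;> linarith
        have hae := (setIntegral_eq_zero_iff_of_nonneg_ae hnn hif.integrableOn).1 hIz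
        have hmem : ∀ᵐ ω ∂(μ.restrict (A 1 0)), ω ∈ S := by
          filter_upwards [hae, ae_restrict_mem (hmA 1 0)] with ω hfω hω
          have e1 := h10 ω hω.2
          have hfz : f ω = 0 := hfω
          simp only [hfdef] at hfz
          exact ⟨by linarith, e1⟩
        have h2 : μ.restrict (A 1 0) Sᶜ = 0 := ae_iff.1 hmem
        rw [Measure.restrict_apply hmS.compl, Set.inter_comm, ← Set.diff_eq] at h2
        exact h2
    have hUS : μ (U \ S) = 0 := by
      have hsubU : U \ S ⊆ (A 0 0 \ S) ∪ ((A 0 1 \ S) ∪ (A 1 0 \ S)) := by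
        rintro ω ⟨hU, hS⟩
        have hmul : D0 ω = 0 ∨ D1 ω = 0 := by
          have : D0 ω * D1 ω = 0 := hU
          exact Nat.mul_eq_zero.1 this
        rcases hc0 ω with hd0 | hd0 <;> rcases hc1 ω with hd1 | hd1
        · exact Or.inl ⟨⟨hd0, hd1⟩, hS⟩
        · exact Or.inr (Or.inl ⟨⟨hd0, hd1⟩, hS⟩)
        · exact Or.inr (Or.inr ⟨⟨hd0, hd1⟩, hS⟩)
        · omega
      exact measure_mono_null hsubU (measure_union_null hN00 (measure_union_null hN01 hN10))
    exact ⟨hmean, hcond.2 hUS⟩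
  · -- reverse direction
    rintro ⟨hmean, hcond1⟩
    have hUS : μ (U \ S) = 0 := hcond.1 hcond1
    have hmf : Measurable f := hY10.sub hY00
    -- on the ever-untreated cells the gain f vanishes a.e.
    have hcell0 : ∀ d0 d1 : ℕ, d0 = 0 ∨ d1 = 0 → ∫ ω in A d0 d1, f ω ∂μ = 0 := by
      intro d0 d1 hd
      have hsubU : {ω | ¬ f ω = 0} ∩ A d0 d1 ⊆ U \ S := by
        rintro ω ⟨hf0, hd0, hd1⟩
        constructor
        · show D0 ω * D1 ω = 0
          rcases hd with h | h
          · rw [h] at hd0; simp [hd0]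
          · rw [h] at hd1; simp [hd1]
        · intro hωS
          apply hf0
          have e0 : Y00 ω = 1 := hωS.1
          have e1 : Y10 ω = 1 := hωS.2
          simp only [hfdef]
          linarith
      have hnull2 : μ.restrict (A d0 d1) {ω | ¬ f ω = 0} = 0 := by
        have hms0 : MeasurableSet {ω | ¬ f ω = 0} := by
          have he : {ω | ¬ f ω = 0} = (f ⁻¹' {0})ᶜ := by ext ω; simp
          rw [he]; exact (hmf (measurableSet_singleton 0)).compl
        rw [Measure.restrict_apply hms0]
        exact measure_mono_null hsubU hUS
      have hae : f =ᵐ[μ.restrict (A d0 d1)] 0 := by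
        rw [Filter.EventuallyEq, ae_iff]
        simpa using hnull2
      rw [integral_congr_ae hae]
      simp
    have hEf : ∫ ω, f ω ∂μ = 0 := by
      have hsub := integral_sub hi10 hi00
      have : ∫ ω, f ω ∂μ = ∫ ω, Y10 ω ∂μ - ∫ ω, Y00 ω ∂μ := hsub
      rw [this, hmean]
      ring
    have hI11 : ∫ ω in A 1 1, f ω ∂μ = 0 := by
      have h := htotal
      rw [hcell0 1 0 (Or.inr rfl), hcell0 0 0 (Or.inl rfl), hcell0 0 1 (Or.inl rfl), hEf] at h
      linarith
    refine ⟨0, ?_⟩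
    intro d0 d1 hd0 hd1 hp
    have hallI : ∫ ω in A d0 d1, f ω ∂μ = 0 := by
      interval_cases d0 <;> interval_cases d1
      · exact hcell0 0 0 (Or.inl rfl)
      · exact hcell0 0 1 (Or.inl rfl)
      · exact hcell0 1 0 (Or.inr rfl)
      · exact hI11
    rw [hAe, hcexp, hallI, mul_zero]
end

section
/- Suppose in each period t ∈ {0,1}, treatment is a deterministic function of history-invariant present information, Dt = ft(Ut), and the pairs (U0, Y0(0), Y0(1)) and (U1, Y1(0), Y1(1)) are independent. Then the full parallel trends condition holds if and only if strict exogeneity of untreated outcomes holds: E[Yt(0) | D0 = d0, D1 = d1] = μt for constants μ0, μ1 and all (d0, d1) occurring with positive probability. -/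
open MeasureTheory ProbabilityTheory

lemma cexp_eq {Ω : Type*} {mΩ : MeasurableSpace Ω} (μ : Measure Ω) (S : Set Ω) (Y : Ω → ℝ) :
    cexp μ S Y = (μ S).toReal⁻¹ * ∫ ω in S, Y ω ∂μ := by
  rw [cexp, ProbabilityTheory.cond, integral_smul_measure, smul_eq_mul, ENNReal.toReal_inv]

lemma cexp_sub {Ω : Type*} {mΩ : MeasurableSpace Ω} (μ : Measure Ω) (S : Set Ω)
    (hS : μ S ≠ 0) (Y Z : Ω → ℝ) (hY : Integrable Y μ) (hZ : Integrable Z μ) :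
    cexp μ S (fun ω => Y ω - Z ω) = cexp μ S Y - cexp μ S Z := by
  have hYc : Integrable Y (μ[|S]) :=
    (hY.restrict).smul_measure (ENNReal.inv_ne_top.mpr hS)
  have hZc : Integrable Z (μ[|S]) :=
    (hZ.restrict).smul_measure (ENNReal.inv_ne_top.mpr hS)
  exact integral_sub hYc hZc

/-- Selection on present outcomes with serially independent information: if `Dt = ft(Ut)`
and `(U0, Y0(·)) ⟂ (U1, Y1(·))`, then full parallel trends holds iff strict exogeneity of
untreated outcomes holds. -/
theorem stmt_7 {Ω : Type*} [MeasurableSpace Ω] (μ : Measure Ω) [IsProbabilityMeasure μ]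
    {α β : Type*} [MeasurableSpace α] [MeasurableSpace β]
    (U0 : Ω → α) (U1 : Ω → β) (hU0 : Measurable U0) (hU1 : Measurable U1)
    (Y00 Y01 Y10 Y11 : Ω → ℝ)
    (hY00 : Integrable Y00 μ) (hY01 : Integrable Y01 μ)
    (hY10 : Integrable Y10 μ) (hY11 : Integrable Y11 μ)
    (f0 : α → ℕ) (f1 : β → ℕ) (hf0 : Measurable f0) (hf1 : Measurable f1)
    (D0 D1 : Ω → ℕ)
    (hD0 : ∀ ω, D0 ω = f0 (U0 ω)) (hD1 : ∀ ω, D1 ω = f1 (U1 ω))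
    (hD0rng : ∀ ω, D0 ω ≤ 1) (hD1rng : ∀ ω, D1 ω ≤ 1)
    -- independence over time of information and potential outcomes
    (hindep : IndepFun (fun ω => (U0 ω, Y00 ω, Y01 ω)) (fun ω => (U1 ω, Y10 ω, Y11 ω)) μ) :
    (∃ τ : ℝ, ∀ d0 d1 : ℕ, d0 ≤ 1 → d1 ≤ 1 → 0 < μ {ω | D0 ω = d0 ∧ D1 ω = d1} →
        cexp μ {ω | D0 ω = d0 ∧ D1 ω = d1} (fun ω => Y10 ω - Y00 ω) = τ)
    ↔
    (∃ μ0 μ1 : ℝ, ∀ d0 d1 : ℕ, d0 ≤ 1 → d1 ≤ 1 → 0 < μ {ω | D0 ω = d0 ∧ D1 ω = d1} →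
        cexp μ {ω | D0 ω = d0 ∧ D1 ω = d1} Y00 = μ0 ∧
        cexp μ {ω | D0 ω = d0 ∧ D1 ω = d1} Y10 = μ1) := by
  classical
  set A : ℕ → Set Ω := fun d => U0 ⁻¹' (f0 ⁻¹' {d}) with hAdef
  set B : ℕ → Set Ω := fun d => U1 ⁻¹' (f1 ⁻¹' {d}) with hBdef
  have hA : ∀ d, MeasurableSet (A d) := fun d => hU0 (hf0 (measurableSet_singleton d))
  have hB : ∀ d, MeasurableSet (B d) := fun d => hU1 (hf1 (measurableSet_singleton d))
  have hset : ∀ d0 d1, {ω | D0 ω = d0 ∧ D1 ω = d1} = A d0 ∩ B d1 := by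
    intro d0 d1
    ext ω
    simp [hAdef, hBdef, hD0 ω, hD1 ω, Set.mem_inter_iff]
  -- independence of U0 and U1
  have hUind : IndepFun U0 U1 μ := hindep.comp measurable_fst measurable_fst
  have hmul : ∀ d0 d1, μ (A d0 ∩ B d1) = μ (A d0) * μ (B d1) := fun d0 d1 =>
    hUind.measure_inter_preimage_eq_mul _ _ (hf0 (measurableSet_singleton d0))
      (hf1 (measurableSet_singleton d1))
  have hfin : ∀ (S : Set Ω), μ S ≠ ⊤ := fun S => measure_ne_top μ S
  -- factorization for Y00
  have hfac0 : ∀ d0 d1, ∫ ω in A d0 ∩ B d1, Y00 ω ∂μ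
      = (∫ ω in A d0, Y00 ω ∂μ) * (μ (B d1)).toReal := by
    intro d0 d1
    set φ : α × ℝ × ℝ → ℝ := fun p => if f0 p.1 = d0 then p.2.1 else 0 with hφdef
    set ψ : β × ℝ × ℝ → ℝ := fun p => if f1 p.1 = d1 then (1 : ℝ) else 0 with hψdef
    have hφ : Measurable φ :=
      Measurable.ite ((hf0.comp measurable_fst) (measurableSet_singleton d0))
        (measurable_fst.comp measurable_snd) measurable_const
    have hψ : Measurable ψ :=
      Measurable.ite ((hf1.comp measurable_fst) (measurableSet_singleton d1))
        measurable_const measurable_const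
    have hXeq : (φ ∘ fun ω => (U0 ω, Y00 ω, Y01 ω)) = (A d0).indicator Y00 := by
      funext ω
      by_cases h : f0 (U0 ω) = d0 <;>
        simp [hφdef, hAdef, Set.indicator_apply, h, Function.comp]
    have hWeq : (ψ ∘ fun ω => (U1 ω, Y10 ω, Y11 ω)) = (B d1).indicator (fun _ => (1 : ℝ)) := by
      funext ω
      by_cases h : f1 (U1 ω) = d1 <;>
        simp [hψdef, hBdef, Set.indicator_apply, h, Function.comp]
    have hI : IndepFun ((A d0).indicator Y00) ((B d1).indicator fun _ => (1 : ℝ)) μ := by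
      rw [← hXeq, ← hWeq]; exact hindep.comp hφ hψ
    have hXint : Integrable ((A d0).indicator Y00) μ := hY00.indicator (hA d0)
    have hWint : Integrable ((B d1).indicator fun _ => (1 : ℝ)) μ :=
      (integrable_const (1 : ℝ)).indicator (hB d1)
    have hkey := hI.integral_mul_eq_mul_integral hXint.aestronglyMeasurable hWint.aestronglyMeasurable
    have hptw : (fun ω => (A d0).indicator Y00 ω * (B d1).indicator (fun _ => (1 : ℝ)) ω)
        = (A d0 ∩ B d1).indicator Y00 := by
      funext ω
      by_cases h1 : ω ∈ A d0 <;> by_cases h2 : ω ∈ B d1 <;>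
        simp [Set.indicator_apply, h1, h2]
    rw [show ((A d0).indicator Y00) * ((B d1).indicator fun _ => (1:ℝ)) =
        (fun ω => (A d0).indicator Y00 ω * (B d1).indicator (fun _ => (1:ℝ)) ω) from rfl,
      hptw, integral_indicator ((hA d0).inter (hB d1)), integral_indicator (hA d0),
      integral_indicator (hB d1)] at hkey
    simp at hkey
    exact hkey
  -- factorization for Y10
  have hfac1 : ∀ d0 d1, ∫ ω in A d0 ∩ B d1, Y10 ω ∂μ
      = (μ (A d0)).toReal * ∫ ω in B d1, Y10 ω ∂μ := by
    intro d0 d1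
    set φ : β × ℝ × ℝ → ℝ := fun p => if f1 p.1 = d1 then p.2.1 else 0 with hφdef
    set ψ : α × ℝ × ℝ → ℝ := fun p => if f0 p.1 = d0 then (1 : ℝ) else 0 with hψdef
    have hφ : Measurable φ :=
      Measurable.ite ((hf1.comp measurable_fst) (measurableSet_singleton d1))
        (measurable_fst.comp measurable_snd) measurable_const
    have hψ : Measurable ψ :=
      Measurable.ite ((hf0.comp measurable_fst) (measurableSet_singleton d0))
        measurable_const measurable_const
    have hXeq : (φ ∘ fun ω => (U1 ω, Y10 ω, Y11 ω)) = (B d1).indicator Y10 := by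
      funext ω
      by_cases h : f1 (U1 ω) = d1 <;>
        simp [hφdef, hBdef, Set.indicator_apply, h, Function.comp]
    have hWeq : (ψ ∘ fun ω => (U0 ω, Y00 ω, Y01 ω)) = (A d0).indicator (fun _ => (1 : ℝ)) := by
      funext ω
      by_cases h : f0 (U0 ω) = d0 <;>
        simp [hψdef, hAdef, Set.indicator_apply, h, Function.comp]
    have hI : IndepFun ((B d1).indicator Y10) ((A d0).indicator fun _ => (1 : ℝ)) μ := by
      rw [← hXeq, ← hWeq]; exact hindep.symm.comp hφ hψ
    have hXint : Integrable ((B d1).indicator Y10) μ := hY10.indicator (hB d1)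
    have hWint : Integrable ((A d0).indicator fun _ => (1 : ℝ)) μ :=
      (integrable_const (1 : ℝ)).indicator (hA d0)
    have hkey := hI.integral_mul_eq_mul_integral hXint.aestronglyMeasurable hWint.aestronglyMeasurable
    have hptw : (fun ω => (B d1).indicator Y10 ω * (A d0).indicator (fun _ => (1 : ℝ)) ω)
        = (A d0 ∩ B d1).indicator Y10 := by
      funext ω
      by_cases h1 : ω ∈ A d0 <;> by_cases h2 : ω ∈ B d1 <;>
        simp [Set.indicator_apply, h1, h2]
    rw [show ((B d1).indicator Y10) * ((A d0).indicator fun _ => (1:ℝ)) =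
        (fun ω => (B d1).indicator Y10 ω * (A d0).indicator (fun _ => (1:ℝ)) ω) from rfl,
      hptw, integral_indicator ((hA d0).inter (hB d1)), integral_indicator (hB d1),
      integral_indicator (hA d0)] at hkey
    simp at hkey
    rw [hkey, measureReal_def]; ring
  -- the constants
  set a : ℕ → ℝ := fun d => (μ (A d)).toReal⁻¹ * ∫ ω in A d, Y00 ω ∂μ with hadef
  set b : ℕ → ℝ := fun d => (μ (B d)).toReal⁻¹ * ∫ ω in B d, Y10 ω ∂μ with hbdef
  have htoRealA : ∀ d, μ (A d) ≠ 0 → (μ (A d)).toReal ≠ 0 := fun d h =>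
    ENNReal.toReal_ne_zero.mpr ⟨h, hfin _⟩
  have htoRealB : ∀ d, μ (B d) ≠ 0 → (μ (B d)).toReal ≠ 0 := fun d h =>
    ENNReal.toReal_ne_zero.mpr ⟨h, hfin _⟩
  -- cexp computations
  have hcexp0 : ∀ d0 d1, μ (A d0) ≠ 0 → μ (B d1) ≠ 0 →
      cexp μ {ω | D0 ω = d0 ∧ D1 ω = d1} Y00 = a d0 := by
    intro d0 d1 h0 h1
    rw [hset, cexp_eq, hmul, hfac0, ENNReal.toReal_mul, hadef]
    field_simp [htoRealA d0 h0, htoRealB d1 h1]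
  have hcexp1 : ∀ d0 d1, μ (A d0) ≠ 0 → μ (B d1) ≠ 0 →
      cexp μ {ω | D0 ω = d0 ∧ D1 ω = d1} Y10 = b d1 := by
    intro d0 d1 h0 h1
    rw [hset, cexp_eq, hmul, hfac1, ENNReal.toReal_mul, hbdef]
    field_simp [htoRealA d0 h0, htoRealB d1 h1]
  have hposAB : ∀ d0 d1, 0 < μ {ω | D0 ω = d0 ∧ D1 ω = d1} →
      μ (A d0) ≠ 0 ∧ μ (B d1) ≠ 0 := by
    intro d0 d1 h
    rw [hset, hmul] at h
    exact ⟨fun h0 => by simp [h0] at h, fun h1 => by simp [h1] at h⟩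
  have hABpos : ∀ d0 d1, μ (A d0) ≠ 0 → μ (B d1) ≠ 0 →
      0 < μ {ω | D0 ω = d0 ∧ D1 ω = d1} := by
    intro d0 d1 h0 h1
    rw [hset, hmul]
    exact ENNReal.mul_pos h0 h1
  have hsub : ∀ d0 d1, 0 < μ {ω | D0 ω = d0 ∧ D1 ω = d1} →
      cexp μ {ω | D0 ω = d0 ∧ D1 ω = d1} (fun ω => Y10 ω - Y00 ω)
        = cexp μ {ω | D0 ω = d0 ∧ D1 ω = d1} Y10
          - cexp μ {ω | D0 ω = d0 ∧ D1 ω = d1} Y00 := by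
    intro d0 d1 h
    exact cexp_sub μ _ (ne_of_gt h) Y10 Y00 hY10 hY00
  -- existence of positive-probability values
  have hcoverA : A 0 ∪ A 1 = Set.univ := by
    ext ω
    have := hD0rng ω
    rw [hD0 ω] at this
    interval_cases h : f0 (U0 ω) <;> simp [hAdef, h]
  have hcoverB : B 0 ∪ B 1 = Set.univ := by
    ext ω
    have := hD1rng ω
    rw [hD1 ω] at this
    interval_cases h : f1 (U1 ω) <;> simp [hBdef, h]
  have hexA : ∃ e, e ≤ 1 ∧ μ (A e) ≠ 0 := by
    by_contra h
    push_neg at h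
    have h0 : μ (A 0) = 0 := h 0 (by norm_num)
    have h1 : μ (A 1) = 0 := h 1 le_rfl
    have : μ Set.univ = 0 := by
      rw [← hcoverA]
      exact le_antisymm ((measure_union_le _ _).trans (by simp [h0, h1])) zero_le
    simp at this
  have hexB : ∃ e, e ≤ 1 ∧ μ (B e) ≠ 0 := by
    by_contra h
    push_neg at h
    have h0 : μ (B 0) = 0 := h 0 (by norm_num)
    have h1 : μ (B 1) = 0 := h 1 le_rfl
    have : μ Set.univ = 0 := by
      rw [← hcoverB]
      exact le_antisymm ((measure_union_le _ _).trans (by simp [h0, h1])) zero_le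
    simp at this
  obtain ⟨e0, he0le, he0⟩ := hexA
  obtain ⟨e1, he1le, he1⟩ := hexB
  constructor
  · rintro ⟨τ, hτ⟩
    refine ⟨a e0, b e1, fun d0 d1 hd0 hd1 hpos => ?_⟩
    obtain ⟨hAp, hBp⟩ := hposAB d0 d1 hpos
    have key : ∀ c0 c1, c0 ≤ 1 → c1 ≤ 1 → μ (A c0) ≠ 0 → μ (B c1) ≠ 0 →
        b c1 - a c0 = τ := by
      intro c0 c1 hc0 hc1 hA0 hB0
      have hp := hABpos c0 c1 hA0 hB0
      have := hτ c0 c1 hc0 hc1 hp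
      rw [hsub c0 c1 hp, hcexp0 c0 c1 hA0 hB0, hcexp1 c0 c1 hA0 hB0] at this
      exact this
    have h1 : b e1 - a d0 = τ := key d0 e1 hd0 he1le hAp he1
    have h2 : b e1 - a e0 = τ := key e0 e1 he0le he1le he0 he1
    have h3 : b d1 - a e0 = τ := key e0 d1 he0le hd1 he0 hBp
    constructor
    · rw [hcexp0 d0 d1 hAp hBp]; linarith
    · rw [hcexp1 d0 d1 hAp hBp]; linarith
  · rintro ⟨μ0, μ1, hex⟩
    refine ⟨μ1 - μ0, fun d0 d1 hd0 hd1 hpos => ?_⟩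
    obtain ⟨h00, h10⟩ := hex d0 d1 hd0 hd1 hpos
    rw [hsub d0 d1 hpos, h00, h10]
end

section
/- In the Roy model with prohibitive cost of treatment reversal, where D1(0) = 1{Y1(1) ≥ Y1(0)}, D0 = 1{Y0(1) − Y0(0) + β·min{Y1(1) − Y1(0), 0} ≥ 0} with β ∈ (0,1], D1 = 1 if D0 = 1, binary outcomes Yt(d) ∈ {0,1}, and P(D0 = D1 = 0) > 0 and P(D0 < D1) > 0: the full parallel trends condition holds if and only if (1) E[Y0(0)] = E[Y1(0)] and (2) P(Y0(0) = Y1(0) = 1 | D0·D1 = 0) = 1. -/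
open MeasureTheory ProbabilityTheory

/-- Roy model with prohibitive cost of treatment reversal: with binary outcomes, the
forward-looking period-0 rule internalizing the lost option value, irreversibility
(`D1 = 1` whenever `D0 = 1`), the Roy rule in period 1 when untreated, and positive masses
of never-treated and switchers into treatment, full parallel trends holds iff (1) mean
untreated outcomes are stationary and (2) untreated outcomes are degenerate at 1 among the
ever-untreated. -/
theorem stmt_8 {Ω : Type*} [MeasurableSpace Ω] (μ : Measure Ω) [IsProbabilityMeasure μ]
    (Y00 Y01 Y10 Y11 : Ω → ℝ)
    (hbin : ∀ ω, (Y00 ω = 0 ∨ Y00 ω = 1) ∧ (Y01 ω = 0 ∨ Y01 ω = 1) ∧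
      (Y10 ω = 0 ∨ Y10 ω = 1) ∧ (Y11 ω = 0 ∨ Y11 ω = 1))
    (hY00 : Measurable Y00) (hY01 : Measurable Y01)
    (hY10 : Measurable Y10) (hY11 : Measurable Y11)
    (β : ℝ) (hβ0 : 0 < β) (hβ1 : β ≤ 1)
    (D0 D1 : Ω → ℕ)
    -- period-0 rule internalizing the lost option value of future no-treatment
    (hD0 : ∀ ω, D0 ω =
      if Y01 ω - Y00 ω + β * min (Y11 ω - Y10 ω) 0 ≥ 0 then 1 else 0)
    -- irreversibility and the Roy rule in period 1 when untreated in period 0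
    (hD1 : ∀ ω, D1 ω = if D0 ω = 1 then 1 else (if Y11 ω ≥ Y10 ω then 1 else 0))
    -- positive mass of never-treated and of switchers into treatment
    (hnever : 0 < μ {ω | D0 ω = 0 ∧ D1 ω = 0})
    (hswitch : 0 < μ {ω | D0 ω < D1 ω}) :
    (∃ τ : ℝ, ∀ d0 d1 : ℕ, d0 ≤ 1 → d1 ≤ 1 → 0 < μ {ω | D0 ω = d0 ∧ D1 ω = d1} →
        cexp μ {ω | D0 ω = d0 ∧ D1 ω = d1} (fun ω => Y10 ω - Y00 ω) = τ)
    ↔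
    ((∫ ω, Y00 ω ∂μ = ∫ ω, Y10 ω ∂μ) ∧
      (μ[|{ω | D0 ω * D1 ω = 0}]) {ω | Y00 ω = 1 ∧ Y10 ω = 1} = 1) := by
  -- measurability of decision rules
  have mD0 : Measurable D0 := by
    have : D0 = fun ω =>
        if Y01 ω - Y00 ω + β * min (Y11 ω - Y10 ω) 0 ≥ 0 then 1 else 0 := funext hD0
    rw [this]
    exact Measurable.ite
      (measurableSet_le measurable_const
        ((hY01.sub hY00).add (measurable_const.mul ((hY11.sub hY10).min measurable_const))))
      measurable_const measurable_const
  have mD1 : Measurable D1 := by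
    have : D1 = fun ω => if D0 ω = 1 then 1 else (if Y11 ω ≥ Y10 ω then 1 else 0) :=
      funext hD1
    rw [this]
    exact Measurable.ite (mD0 (measurableSet_singleton 1)) measurable_const
      (Measurable.ite (measurableSet_le hY10 hY11) measurable_const measurable_const)
  -- pointwise facts
  have hD0le : ∀ ω, D0 ω ≤ 1 := by
    intro ω; rw [hD0 ω]; split <;> simp
  have hD1le : ∀ ω, D1 ω ≤ 1 := by
    intro ω; rw [hD1 ω]; split
    · simp
    · split <;> simp
  have hirrev : ∀ ω, D0 ω = 1 → D1 ω = 1 := by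
    intro ω h; rw [hD1 ω, if_pos h]
  have hnever_pt : ∀ ω, D0 ω = 0 → D1 ω = 0 → Y10 ω = 1 ∧ Y11 ω = 0 := by
    intro ω h0 h1
    rw [hD1 ω, h0] at h1
    simp only [Nat.zero_ne_one, if_false] at h1
    have hlt : Y11 ω < Y10 ω := by
      by_contra h; rw [if_pos (not_lt.1 h)] at h1; exact one_ne_zero h1
    rcases (hbin ω).2.2.1 with h10 | h10 <;> rcases (hbin ω).2.2.2 with h11 | h11 <;>
      constructor <;> linarith
  have hswitch_pt : ∀ ω, D0 ω = 0 → D1 ω = 1 → Y00 ω = 1 := by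
    intro ω h0 h1
    rw [hD1 ω, h0] at h1
    simp only [Nat.zero_ne_one, if_false] at h1
    have hge : Y11 ω ≥ Y10 ω := by
      by_contra h; rw [if_neg h] at h1; exact zero_ne_one h1
    have hmin : min (Y11 ω - Y10 ω) 0 = 0 := min_eq_right (by linarith)
    rw [hD0 ω] at h0
    have hneg : ¬ (Y01 ω - Y00 ω + β * min (Y11 ω - Y10 ω) 0 ≥ 0) := by
      intro h; rw [if_pos h] at h0; exact one_ne_zero h0
    rw [hmin, mul_zero, add_zero] at hneg
    rcases (hbin ω).1 with h | h
    · exfalso; rcases (hbin ω).2.1 with h' | h' <;> rw [h, h'] at hneg <;> norm_num at hneg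
    · exact h
  -- integrability
  have integ : ∀ Y : Ω → ℝ, Measurable Y → (∀ ω, Y ω = 0 ∨ Y ω = 1) → Integrable Y μ := by
    intro Y hY hb
    refine ⟨hY.aestronglyMeasurable, HasFiniteIntegral.of_bounded (C := 1)
      (Filter.Eventually.of_forall fun ω => ?_)⟩
    rcases hb ω with h | h <;> rw [h] <;> norm_num
  have hint : Integrable (fun ω => Y10 ω - Y00 ω) μ :=
    (integ Y10 hY10 fun ω => (hbin ω).2.2.1).sub (integ Y00 hY00 fun ω => (hbin ω).1)
  -- sets
  set A00 : Set Ω := {ω | D0 ω = 0 ∧ D1 ω = 0} with hA00def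
  set A01 : Set Ω := {ω | D0 ω = 0 ∧ D1 ω = 1} with hA01def
  set A11 : Set Ω := {ω | D0 ω = 1 ∧ D1 ω = 1} with hA11def
  set B : Set Ω := {ω | D0 ω * D1 ω = 0} with hBdef
  set S : Set Ω := {ω | Y00 ω = 1 ∧ Y10 ω = 1} with hSdef
  have mA00 : MeasurableSet A00 :=
    (mD0 (measurableSet_singleton 0)).inter (mD1 (measurableSet_singleton 0))
  have mA01 : MeasurableSet A01 :=
    (mD0 (measurableSet_singleton 0)).inter (mD1 (measurableSet_singleton 1))
  have mA11 : MeasurableSet A11 :=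
    (mD0 (measurableSet_singleton 1)).inter (mD1 (measurableSet_singleton 1))
  have mB : MeasurableSet B := (mD0.mul mD1) (measurableSet_singleton 0)
  have mS : MeasurableSet S :=
    (hY00 (measurableSet_singleton 1)).inter (hY10 (measurableSet_singleton 1))
  have hBeq : B = A00 ∪ A01 := by
    ext ω
    simp only [hBdef, hA00def, hA01def, Set.mem_setOf_eq, Set.mem_union, Nat.mul_eq_zero]
    constructor
    · rintro (h0 | h1)
      · rcases Nat.lt_or_ge (D1 ω) 1 with h | h
        · exact Or.inl ⟨h0, Nat.lt_one_iff.1 h⟩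
        · exact Or.inr ⟨h0, le_antisymm (hD1le ω) h⟩
      · refine Or.inl ⟨?_, h1⟩
        by_contra h
        have := hirrev ω (le_antisymm (hD0le ω) (Nat.one_le_iff_ne_zero.2 h))
        omega
    · rintro (⟨h0, _⟩ | ⟨h0, _⟩) <;> exact Or.inl h0
  have hBceq : Bᶜ = A11 := by
    ext ω
    simp only [hBdef, hA11def, Set.mem_compl_iff, Set.mem_setOf_eq, Nat.mul_eq_zero]
    constructor
    · intro h
      push_neg at h
      exact ⟨le_antisymm (hD0le ω) (Nat.one_le_iff_ne_zero.2 h.1),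
        le_antisymm (hD1le ω) (Nat.one_le_iff_ne_zero.2 h.2)⟩
    · rintro ⟨h0, h1⟩; omega
  have hswitch' : 0 < μ A01 := by
    have : {ω | D0 ω < D1 ω} = A01 := by
      ext ω
      simp only [hA01def, Set.mem_setOf_eq]
      constructor
      · intro h
        have := hD1le ω
        omega
      · rintro ⟨h0, h1⟩; omega
    rwa [this] at hswitch
  have hA00pos : 0 < μ A00 := hnever
  have hBpos : 0 < μ B := lt_of_lt_of_le hA00pos (measure_mono (hBeq ▸ Set.subset_union_left))
  -- cexp formula
  have cexp_eq : ∀ A : Set Ω, cexp μ A (fun ω => Y10 ω - Y00 ω)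
      = (μ A)⁻¹.toReal * ∫ ω in A, (Y10 ω - Y00 ω) ∂μ := by
    intro A
    unfold cexp
    rw [ProbabilityTheory.cond, integral_smul_measure]
    rfl
  have toReal_inv_pos : ∀ A : Set Ω, 0 < μ A → 0 < (μ A)⁻¹.toReal := by
    intro A hA
    exact ENNReal.toReal_pos (ENNReal.inv_ne_zero.2 (measure_ne_top μ A))
      (ENNReal.inv_ne_top.2 (ne_of_gt hA))
  -- sign facts on the groups
  have hf_nonneg00 : ∀ ω ∈ A00, 0 ≤ Y10 ω - Y00 ω := by
    intro ω hω
    have h10 := (hnever_pt ω hω.1 hω.2).1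
    rcases (hbin ω).1 with h | h <;> rw [h10, h] <;> norm_num
  have hf_nonpos01 : ∀ ω ∈ A01, Y10 ω - Y00 ω ≤ 0 := by
    intro ω hω
    have h00 := hswitch_pt ω hω.1 hω.2
    rcases (hbin ω).2.2.1 with h | h <;> rw [h00, h] <;> norm_num
  have disj : Disjoint A00 A01 := by
    rw [Set.disjoint_left]
    rintro ω ⟨_, h0⟩ ⟨_, h1⟩
    omega
  -- decomposition of the total integral
  have hdecomp : (∫ ω, (Y10 ω - Y00 ω) ∂μ)
      = (∫ ω in A00, (Y10 ω - Y00 ω) ∂μ) + (∫ ω in A01, (Y10 ω - Y00 ω) ∂μ)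
        + (∫ ω in A11, (Y10 ω - Y00 ω) ∂μ) := by
    have h1 : (∫ ω in B, (Y10 ω - Y00 ω) ∂μ) + (∫ ω in Bᶜ, (Y10 ω - Y00 ω) ∂μ)
        = ∫ ω, (Y10 ω - Y00 ω) ∂μ := integral_add_compl mB hint
    have h2 : (∫ ω in B, (Y10 ω - Y00 ω) ∂μ)
        = (∫ ω in A00, (Y10 ω - Y00 ω) ∂μ) + (∫ ω in A01, (Y10 ω - Y00 ω) ∂μ) := by
      rw [hBeq]
      exact setIntegral_union disj mA01 hint.integrableOn hint.integrableOn
    rw [← h1, h2, hBceq]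
  have hsub : (∫ ω, (Y10 ω - Y00 ω) ∂μ) = (∫ ω, Y10 ω ∂μ) - ∫ ω, Y00 ω ∂μ :=
    integral_sub (integ Y10 hY10 fun ω => (hbin ω).2.2.1) (integ Y00 hY00 fun ω => (hbin ω).1)
  constructor
  · rintro ⟨τ, hτ⟩
    have h00 := hτ 0 0 (by norm_num) (by norm_num) hnever
    have h01 := hτ 0 1 (by norm_num) (by norm_num) hswitch'
    rw [cexp_eq] at h00 h01
    have hτ0 : τ = 0 := by
      have hle : 0 ≤ τ := h00 ▸ mul_nonneg ENNReal.toReal_nonneg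
        (setIntegral_nonneg mA00 hf_nonneg00)
      have hge : τ ≤ 0 := h01 ▸ mul_nonpos_of_nonneg_of_nonpos ENNReal.toReal_nonneg
        (setIntegral_nonpos mA01 hf_nonpos01)
      linarith
    have hI00 : (∫ ω in A00, (Y10 ω - Y00 ω) ∂μ) = 0 := by
      rcases mul_eq_zero.1 (h00.trans hτ0) with h | h
      · exact absurd h (ne_of_gt (toReal_inv_pos A00 hA00pos))
      · exact h
    have hI01 : (∫ ω in A01, (Y10 ω - Y00 ω) ∂μ) = 0 := by
      rcases mul_eq_zero.1 (h01.trans hτ0) with h | h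
      · exact absurd h (ne_of_gt (toReal_inv_pos A01 hswitch'))
      · exact h
    -- a.e. degeneracy on A00
    have hae00 : (fun ω => Y10 ω - Y00 ω) =ᵐ[μ.restrict A00] 0 := by
      refine (setIntegral_eq_zero_iff_of_nonneg_ae ?_ hint.integrableOn).1 hI00
      exact (ae_restrict_iff' mA00).2 (Filter.Eventually.of_forall hf_nonneg00)
    have hae01 : (fun ω => Y10 ω - Y00 ω) =ᵐ[μ.restrict A01] 0 := by
      have hneg : (fun ω => -(Y10 ω - Y00 ω)) =ᵐ[μ.restrict A01] 0 := by
        refine (setIntegral_eq_zero_iff_of_nonneg_ae ?_ hint.integrableOn.neg).1 ?_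
        · exact (ae_restrict_iff' mA01).2 (Filter.Eventually.of_forall fun ω hω => by
            simpa using hf_nonpos01 ω hω)
        · have : (∫ ω in A01, -(Y10 ω - Y00 ω) ∂μ) = 0 := by
            rw [integral_neg, hI01, neg_zero]
          simpa using this
      filter_upwards [hneg] with ω hω
      simp only [Pi.zero_apply] at hω ⊢
      linarith
    have hnull00 : μ (A00 \ S) = 0 := by
      have h := (ae_restrict_iff' mA00).1 hae00
      rw [ae_iff] at h
      refine measure_mono_null ?_ h
      intro ω hω
      simp only [Set.mem_setOf_eq, Pi.zero_apply, Classical.not_imp]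
      refine ⟨hω.1, fun hfz => hω.2 ?_⟩
      have h10 := (hnever_pt ω hω.1.1 hω.1.2).1
      exact ⟨by linarith, h10⟩
    have hnull01 : μ (A01 \ S) = 0 := by
      have h := (ae_restrict_iff' mA01).1 hae01
      rw [ae_iff] at h
      refine measure_mono_null ?_ h
      intro ω hω
      simp only [Set.mem_setOf_eq, Pi.zero_apply, Classical.not_imp]
      refine ⟨hω.1, fun hfz => hω.2 ?_⟩
      have h00' := hswitch_pt ω hω.1.1 hω.1.2
      exact ⟨h00', by linarith⟩
    have hnullB : μ (B \ S) = 0 := by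
      refine measure_mono_null ?_ (measure_union_null hnull00 hnull01)
      rw [hBeq]
      rintro ω ⟨hω, hωS⟩
      rcases hω with h | h
      · exact Or.inl ⟨h, hωS⟩
      · exact Or.inr ⟨h, hωS⟩
    have hI11 : (∫ ω in A11, (Y10 ω - Y00 ω) ∂μ) = 0 := by
      by_cases h11 : μ A11 = 0
      · rw [Measure.restrict_eq_zero.2 h11, integral_zero_measure]
      · have h := hτ 1 1 le_rfl le_rfl (pos_iff_ne_zero.2 h11)
        rw [cexp_eq] at h
        rcases mul_eq_zero.1 (h.trans hτ0) with h' | h'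
        · exact absurd h' (ne_of_gt (toReal_inv_pos A11 (pos_iff_ne_zero.2 h11)))
        · exact h'
    constructor
    · have : (∫ ω, (Y10 ω - Y00 ω) ∂μ) = 0 := by
        rw [hdecomp, hI00, hI01, hI11]; ring
      rw [hsub] at this
      linarith
    · rw [ProbabilityTheory.cond_apply mB μ]
      have hBS : μ (B ∩ S) = μ B := by
        have h := measure_inter_add_diff (μ := μ) B mS
        rw [hnullB, add_zero] at h
        exact h
      rw [hBS]
      exact ENNReal.inv_mul_cancel (ne_of_gt hBpos) (measure_ne_top μ B)
  · rintro ⟨h1, h2⟩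
    -- from h2: μ (B \ S) = 0
    have hnullB : μ (B \ S) = 0 := by
      rw [ProbabilityTheory.cond_apply mB μ] at h2
      have hBS : μ (B ∩ S) = μ B := by
        have h := congrArg (μ B * ·) h2
        simp only [mul_one] at h
        rw [← mul_assoc, ENNReal.mul_inv_cancel (ne_of_gt hBpos) (measure_ne_top μ B),
          one_mul] at h
        exact h
      have hadd : μ (B ∩ S) + μ (B \ S) = μ (B ∩ S) + 0 := by
        rw [add_zero, measure_inter_add_diff (μ := μ) B mS, hBS]
      exact (ENNReal.add_right_inj (measure_ne_top μ (B ∩ S))).1 hadd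
    have hnull00 : μ (A00 \ S) = 0 :=
      measure_mono_null (Set.diff_subset_diff_left (hBeq ▸ Set.subset_union_left)) hnullB
    have hnull01 : μ (A01 \ S) = 0 :=
      measure_mono_null (Set.diff_subset_diff_left (hBeq ▸ Set.subset_union_right)) hnullB
    have hIzero : ∀ A : Set Ω, MeasurableSet A → μ (A \ S) = 0 →
        (∫ ω in A, (Y10 ω - Y00 ω) ∂μ) = 0 := by
      intro A mA hA
      refine integral_eq_zero_of_ae ?_
      have hmem : ∀ᵐ ω ∂μ.restrict A, ω ∈ A := ae_restrict_mem mA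
      have hnmem : ∀ᵐ ω ∂μ.restrict A, ω ∉ A \ S := by
        have : μ.restrict A (A \ S) = 0 :=
          le_antisymm (hA ▸ Measure.restrict_le_self (A \ S)) zero_le
        exact measure_eq_zero_iff_ae_notMem.1 this
      filter_upwards [hmem, hnmem] with ω hωA hωNS
      have hωS : ω ∈ S := by
        by_contra h
        exact hωNS ⟨hωA, h⟩
      simp only [hSdef, Set.mem_setOf_eq] at hωS
      simp only [Pi.zero_apply, hωS.1, hωS.2, sub_self]
    have hI00 : (∫ ω in A00, (Y10 ω - Y00 ω) ∂μ) = 0 := hIzero A00 mA00 hnull00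
    have hI01 : (∫ ω in A01, (Y10 ω - Y00 ω) ∂μ) = 0 := hIzero A01 mA01 hnull01
    have hI11 : (∫ ω in A11, (Y10 ω - Y00 ω) ∂μ) = 0 := by
      have htot : (∫ ω, (Y10 ω - Y00 ω) ∂μ) = 0 := by rw [hsub, h1, sub_self]
      rw [hdecomp] at htot
      linarith
    refine ⟨0, fun d0 d1 hd0 hd1 hpos => ?_⟩
    interval_cases d0 <;> interval_cases d1
    · show cexp μ A00 (fun ω => Y10 ω - Y00 ω) = 0
      rw [cexp_eq, hI00, mul_zero]
    · show cexp μ A01 (fun ω => Y10 ω - Y00 ω) = 0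
      rw [cexp_eq, hI01, mul_zero]
    · exfalso
      have hempty : {ω | D0 ω = 1 ∧ D1 ω = 0} = (∅ : Set Ω) := by
        ext ω
        simp only [Set.mem_setOf_eq, Set.mem_empty_iff_false, iff_false, not_and]
        intro ha
        have := hirrev ω ha
        omega
      rw [hempty, measure_empty] at hpos
      exact lt_irrefl 0 hpos
    · show cexp μ A11 (fun ω => Y10 ω - Y00 ω) = 0
      rw [cexp_eq, hI11, mul_zero]
end

section
/- In the two-period optimal stopping problem where D0 is a measurable function of U0 and D1 is a measurable function of U0 alone (because E[Y1(0) | U0, Y0(0)] = E[Y1(0) | U0]), and E[Y1(0) − Y0(0) | U0] = τ a.s., the parallel trends condition holds: E[Y1(0) − Y0(0) | D0 = 1] = E[Y1(0) − Y0(0) | D0 = 0, D1 = d] = τ for d = 0,1. -/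
open MeasureTheory ProbabilityTheory

lemma cexp_eq_of_condexp_const {Ω : Type*} {m0 : MeasurableSpace Ω} (μ : Measure Ω)
    [IsProbabilityMeasure μ] (m : MeasurableSpace Ω) (hm : m ≤ m0)
    (Y : Ω → ℝ) (hY : Integrable Y μ) (τ : ℝ)
    (hτ : μ[Y | m] =ᵐ[μ] fun _ => τ)
    (A : Set Ω) (hA : MeasurableSet[m] A) (hpos : 0 < μ A) :
    cexp μ A Y = τ := by
  have hfin : μ A ≠ ⊤ := measure_ne_top μ A
  have hset : ∫ ω in A, Y ω ∂μ = τ * (μ A).toReal := by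
    rw [← setIntegral_condExp hm hY hA,
      integral_congr_ae (ae_restrict_of_ae hτ)]
    simp [mul_comm, Measure.real]
  rw [cexp, ProbabilityTheory.cond, integral_smul_measure]
  change (μ A)⁻¹.toReal • (∫ ω in A, Y ω ∂μ) = τ
  rw [hset, smul_eq_mul, ← mul_assoc, ENNReal.toReal_inv, mul_comm _ τ, mul_assoc,
    inv_mul_cancel₀ (ENNReal.toReal_ne_zero.mpr ⟨hpos.ne', hfin⟩), mul_one]

/-- Optimal stopping with sufficient initial information: if both stopping decisions are
measurable with respect to the initial-information σ-algebra `m` (σ(U0)) — as occurs when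
`E[Y1(0) | U0, Y0(0)] = E[Y1(0) | U0]` — and the untreated trend is mean-independent of the
initial information, then parallel trends holds. -/
theorem stmt_9 {Ω : Type*} {m0 : MeasurableSpace Ω} (μ : Measure Ω) [IsProbabilityMeasure μ]
    (m : MeasurableSpace Ω) (hm : m ≤ m0)
    (Y0 Y1 : Ω → ℝ) (hY0 : Integrable Y0 μ) (hY1 : Integrable Y1 μ)
    (D0 D1 : Ω → ℕ) (hD0 : Measurable[m] D0) (hD1 : Measurable[m] D1)
    (τ : ℝ)
    (hτ : μ[fun ω => Y1 ω - Y0 ω | m] =ᵐ[μ] fun _ => τ)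
    (hpos1 : 0 < μ {ω | D0 ω = 1})
    (hpos00 : 0 < μ {ω | D0 ω = 0 ∧ D1 ω = 0})
    (hpos01 : 0 < μ {ω | D0 ω = 0 ∧ D1 ω = 1}) :
    cexp μ {ω | D0 ω = 1} (fun ω => Y1 ω - Y0 ω) = τ ∧
    (∀ d : ℕ, d ≤ 1 →
      cexp μ {ω | D0 ω = 0 ∧ D1 ω = d} (fun ω => Y1 ω - Y0 ω) = τ) := by
  have hInt : Integrable (fun ω => Y1 ω - Y0 ω) μ := hY1.sub hY0
  refine ⟨cexp_eq_of_condexp_const μ m hm _ hInt τ hτ _ (hD0 (measurableSet_singleton 1)) hpos1,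
    fun d hd => cexp_eq_of_condexp_const μ m hm _ hInt τ hτ _ ?_ ?_⟩
  · exact (hD0 (measurableSet_singleton 0)).inter (hD1 (measurableSet_singleton d))
  · interval_cases d
    · exact hpos00
    · exact hpos01
end

section
/- In the learning model with pre-treatment period, for any initial-information value u* in the valuable-learning set (where the period-1 treatment decision is D1 = 1 − Y0(0) conditionally on U0 = u*), the following hold: (i) E[Y1(0) | U0 = u*, D0 = D1 = 0] ≥ E[Y1(0) | U0 = u*, D0 < D1]; and (ii) E[Y1(0) − Y0(0) | U0 = u*, D0 = D1 = 0] ≤ 0 ≤ E[Y1(0) − Y0(0) | U0 = u*, D0 < D1]. -/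
open MeasureTheory ProbabilityTheory

lemma restrict_integral_nonpos {Ω : Type*} {mΩ : MeasurableSpace Ω} (μ : Measure Ω)
    (s : Set Ω) (f : Ω → ℝ) (hf : ∀ ω ∈ s, f ω ≤ 0) :
    ∫ ω, f ω ∂(μ.restrict s) ≤ 0 := by
  by_cases hint : Integrable f (μ.restrict s)
  · obtain ⟨g, hgsm, hgae⟩ := hint.1
    set ν := μ.restrict s
    have hN : ν {ω | f ω ≠ g ω} = 0 := hgae
    set N' := toMeasurable ν {ω | f ω ≠ g ω} with hN'def
    have hN'null : ν N' = 0 := by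
      rw [measure_toMeasurable]; exact hN
    have hN'meas : MeasurableSet N' := measurableSet_toMeasurable _ _
    have hsub : {ω | 0 < f ω} ⊆ N' ∪ ({ω | 0 < g ω} \ N') := by
      intro ω hω
      by_cases hmem : ω ∈ N'
      · exact Or.inl hmem
      · refine Or.inr ⟨?_, hmem⟩
        have : f ω = g ω := by
          by_contra hne
          exact hmem (subset_toMeasurable _ _ hne)
        simpa [← this] using hω
    have hT : ν ({ω | 0 < g ω} \ N') = 0 := by
      have hTmeas : MeasurableSet ({ω | 0 < g ω} \ N') :=
        (hgsm.measurable measurableSet_Ioi).diff hN'meas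
      rw [Measure.restrict_apply hTmeas]
      have hempty : ({ω | 0 < g ω} \ N') ∩ s = ∅ := by
        ext ω
        simp only [Set.mem_inter_iff, Set.mem_diff, Set.mem_setOf_eq, Set.mem_empty_iff_false,
          iff_false, not_and, and_imp]
        intro hg hmem hs
        have hfg : f ω = g ω := by
          by_contra hne
          exact hmem (subset_toMeasurable _ _ hne)
        have := hf ω hs
        rw [hfg] at this
        exact absurd hg (not_lt.mpr this)
      rw [hempty, measure_empty]
    have hae : ∀ᵐ ω ∂ν, f ω ≤ 0 := by
      rw [ae_iff]
      simp only [not_le]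
      exact measure_mono_null hsub (by
        refine le_antisymm ?_ zero_le
        calc ν (N' ∪ ({ω | 0 < g ω} \ N')) ≤ ν N' + ν ({ω | 0 < g ω} \ N') :=
              measure_union_le _ _
          _ = 0 := by rw [hN'null, hT, add_zero])
    exact integral_nonpos_of_ae hae
  · rw [integral_undef hint]

lemma cexp_nonpos {Ω : Type*} {mΩ : MeasurableSpace Ω} (μ : Measure Ω)
    (s : Set Ω) (f : Ω → ℝ) (hf : ∀ ω ∈ s, f ω ≤ 0) :
    cexp μ s f ≤ 0 := by
  unfold cexp
  rw [ProbabilityTheory.cond, integral_smul_measure]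
  have h := restrict_integral_nonpos μ s f hf
  have hc : (0:ℝ) ≤ ((μ s)⁻¹).toReal := ENNReal.toReal_nonneg
  rw [smul_eq_mul]
  exact mul_nonpos_of_nonneg_of_nonpos hc h

lemma cexp_nonneg {Ω : Type*} {mΩ : MeasurableSpace Ω} (μ : Measure Ω)
    (s : Set Ω) (f : Ω → ℝ) (hf : ∀ ω ∈ s, 0 ≤ f ω) :
    0 ≤ cexp μ s f := by
  have h := cexp_nonpos μ s (fun ω => -(f ω)) (fun ω hω => neg_nonpos.mpr (hf ω hω))
  unfold cexp at h ⊢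
  rw [integral_neg] at h
  linarith

/-- Valuable learning and monotone selection: on an initial-information event `A`
(the event `{U0 = u*}` in the valuable-learning set) where the period-1 decision is
`D1 = 1 - Y0(0)`, with a pre-treatment period, binary outcomes, and informative signals,
(i) the never-treated have weakly higher mean untreated period-1 outcomes than switchers
into treatment, and (ii) the untreated trends are ordered oppositely around 0. -/
theorem stmt_16 {Ω : Type*} [MeasurableSpace Ω] (μ : Measure Ω) [IsProbabilityMeasure μ]
    (Y0 Y1 : Ω → ℝ)
    (hY0bin : ∀ ω, Y0 ω = 0 ∨ Y0 ω = 1) (hY1bin : ∀ ω, Y1 ω = 0 ∨ Y1 ω = 1)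
    (D0 D1 : Ω → ℕ)
    -- pre-treatment period
    (hD0 : ∀ ω, D0 ω = 0)
    -- the event {U0 = u*} for a valuable-learning value u*
    (A : Set Ω) (hAmeas : MeasurableSet A)
    -- on A, the period-1 decision conditions on the realized past outcome
    (hvl : ∀ ω ∈ A, (D1 ω : ℝ) = 1 - Y0 ω)
    (hpos0 : 0 < μ (A ∩ {ω | D1 ω = 0})) (hpos1 : 0 < μ (A ∩ {ω | D1 ω = 1}))
    (hposY0 : 0 < μ (A ∩ {ω | Y0 ω = 0})) (hposY1 : 0 < μ (A ∩ {ω | Y0 ω = 1}))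
    -- informativeness of the past untreated outcome
    (hsignal : cexp μ (A ∩ {ω | Y0 ω = 0}) Y1 ≤ cexp μ (A ∩ {ω | Y0 ω = 1}) Y1) :
    (cexp μ (A ∩ {ω | D0 ω = 0 ∧ D1 ω = 1}) Y1
        ≤ cexp μ (A ∩ {ω | D0 ω = 0 ∧ D1 ω = 0}) Y1)
    ∧
    (cexp μ (A ∩ {ω | D0 ω = 0 ∧ D1 ω = 0}) (fun ω => Y1 ω - Y0 ω) ≤ 0
      ∧ 0 ≤ cexp μ (A ∩ {ω | D0 ω = 0 ∧ D1 ω = 1}) (fun ω => Y1 ω - Y0 ω)) := by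
  have hset1 : A ∩ {ω | D0 ω = 0 ∧ D1 ω = 1} = A ∩ {ω | Y0 ω = 0} := by
    ext ω
    simp only [Set.mem_inter_iff, Set.mem_setOf_eq, hD0, true_and]
    constructor
    · rintro ⟨hA, hd⟩
      refine ⟨hA, ?_⟩
      have := hvl ω hA
      rw [hd] at this
      push_cast at this
      linarith
    · rintro ⟨hA, hy⟩
      refine ⟨hA, ?_⟩
      have := hvl ω hA
      rw [hy] at this
      have : (D1 ω : ℝ) = 1 := by linarith
      exact_mod_cast this
  have hset0 : A ∩ {ω | D0 ω = 0 ∧ D1 ω = 0} = A ∩ {ω | Y0 ω = 1} := by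
    ext ω
    simp only [Set.mem_inter_iff, Set.mem_setOf_eq, hD0, true_and]
    constructor
    · rintro ⟨hA, hd⟩
      refine ⟨hA, ?_⟩
      have := hvl ω hA
      rw [hd] at this
      push_cast at this
      linarith
    · rintro ⟨hA, hy⟩
      refine ⟨hA, ?_⟩
      have := hvl ω hA
      rw [hy] at this
      have : (D1 ω : ℝ) = 0 := by linarith
      exact_mod_cast this
  refine ⟨?_, ?_, ?_⟩
  · rw [hset1, hset0]; exact hsignal
  · rw [hset0]
    apply cexp_nonpos
    rintro ω ⟨-, hy⟩
    simp only [Set.mem_setOf_eq] at hy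
    rcases hY1bin ω with h | h <;> rw [h, hy] <;> norm_num
  · rw [hset1]
    apply cexp_nonneg
    rintro ω ⟨-, hy⟩
    simp only [Set.mem_setOf_eq] at hy
    rcases hY1bin ω with h | h <;> rw [h, hy] <;> norm_num
end
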